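/- The function l(x) = e^{2x} − (1+x)e^x − 1 has a unique positive real zero γ, this zero is simple, and every other complex zero z of l satisfies |z| > γ. -/

import Mathlib

/-- The entire function `l(z) = e^{2z} − (1+z)e^z − 1`. -/
noncomputable def lfun (z : ℂ) : ℂ :=
  Complex.exp (2 * z) - (1 + z) * Complex.exp z - 1


noncomputable def acoef (n : ℕ) : ℝ := (2 ^ n - n - 1) / n.factorial

lemma acoef_nonneg (n : ℕ) : 0 ≤ acoef n := by
  have h : (n : ℝ) + 1 ≤ 2 ^ n := by exact_mod_cast (Nat.lt_two_pow_self (n := n))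
  have : (0:ℝ) < n.factorial := by exact_mod_cast n.factorial_pos
  unfold acoef
  apply div_nonneg _ this.le
  linarith

lemma hasSum_exp (z : ℂ) : HasSum (fun n : ℕ => z ^ n / n.factorial) (Complex.exp z) := by
  rw [Complex.exp_eq_exp_ℂ]
  exact NormedSpace.expSeries_div_hasSum_exp z

lemma hasSum_c (z : ℂ) : HasSum (fun n : ℕ => (acoef n : ℂ) * z ^ n) (lfun z + 1) := by
  have h2 : HasSum (fun n : ℕ => (2:ℂ) ^ n * z ^ n / n.factorial) (Complex.exp (2 * z)) := by
    have := hasSum_exp (2 * z)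
    simpa [mul_pow] using this
  have h1 := hasSum_exp z
  have hz : HasSum (fun n : ℕ => z ^ (n + 1) / n.factorial) (z * Complex.exp z) := by
    have := h1.mul_left z
    convert this using 2 with n
    · rfl
    rw [pow_succ']
    ring
  have hshift : HasSum (fun n : ℕ => (n : ℂ) * z ^ n / n.factorial) (z * Complex.exp z) := by
    have key : (fun n : ℕ => ((n + 1 : ℕ) : ℂ) * z ^ (n + 1) / (n + 1).factorial)
        = fun n : ℕ => z ^ (n + 1) / n.factorial := by
      funext n
      rw [Nat.factorial_succ]
      have h0 : ((n:ℂ) + 1) ≠ 0 := by exact_mod_cast Nat.cast_add_one_ne_zero (R := ℂ) n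
      have hf : ((n.factorial : ℂ)) ≠ 0 := by exact_mod_cast Nat.cast_ne_zero.mpr n.factorial_pos.ne'
      push_cast
      field_simp
    have h' : HasSum (fun n : ℕ => ((n + 1 : ℕ) : ℂ) * z ^ (n + 1) / (n + 1).factorial)
        (z * Complex.exp z) := by rw [key]; exact hz
    have := (hasSum_nat_add_iff (f := fun n : ℕ => (n : ℂ) * z ^ n / n.factorial) 1).mp h'
    simpa using this
  have hcomb := (h2.sub h1).sub hshift
  have : lfun z + 1 = Complex.exp (2 * z) - Complex.exp z - z * Complex.exp z := by
    unfold lfun; ring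
  rw [this]
  convert hcomb using 2 with n
  · rfl
  unfold acoef
  push_cast
  field_simp
  ring

/-- Real version `F x = e^{2x} - (1+x)e^x`, so `lfun x = F x - 1` on ℝ. -/
noncomputable def Ffun (x : ℝ) : ℝ := Real.exp (2 * x) - (1 + x) * Real.exp x

lemma lfun_real (x : ℝ) : lfun (x : ℂ) = ((Ffun x - 1 : ℝ) : ℂ) := by
  unfold lfun Ffun
  push_cast [Complex.ofReal_exp]
  ring_nf

lemma hasSum_r (x : ℝ) : HasSum (fun n : ℕ => acoef n * x ^ n) (Ffun x) := by
  have h := hasSum_c (x : ℂ)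
  have hx : lfun (x : ℂ) + 1 = ((Ffun x : ℝ) : ℂ) := by rw [lfun_real]; push_cast; ring
  rw [hx] at h
  have : (fun n : ℕ => (acoef n : ℂ) * (x : ℂ) ^ n) = fun n : ℕ => ((acoef n * x ^ n : ℝ) : ℂ) := by
    funext n; push_cast; ring
  rw [this] at h
  exact Complex.hasSum_ofReal.mp h

lemma Ffun_mono : ∀ x y : ℝ, 0 ≤ x → x < y → Ffun x < Ffun y := by
  intro x y hx hxy
  have hy : 0 ≤ y := hx.trans hxy.le
  have hfx := hasSum_r x
  have hfy := hasSum_r y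
  rw [← hfx.tsum_eq, ← hfy.tsum_eq]
  apply Summable.tsum_lt_tsum_of_nonneg (i := 2)
  · intro n; exact mul_nonneg (acoef_nonneg n) (pow_nonneg hx n)
  · intro n
    exact mul_le_mul_of_nonneg_left (pow_le_pow_left₀ hx hxy.le n) (acoef_nonneg n)
  · have h2 : acoef 2 = 1 / 2 := by norm_num [acoef, Nat.factorial]
    rw [h2]
    have : x ^ 2 < y ^ 2 := by nlinarith
    linarith
  · exact hfy.summable

lemma Ffun_zero : Ffun 0 = 0 := by simp [Ffun]

lemma Ffun_two : 1 < Ffun 2 := by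
  have h1 : (2:ℝ) ≤ Real.exp 1 := by have := Real.add_one_le_exp 1; linarith
  have h2 : (4:ℝ) ≤ Real.exp 2 := by
    have : Real.exp 2 = Real.exp 1 * Real.exp 1 := by rw [← Real.exp_add]; norm_num
    nlinarith
  have h4 : Real.exp 4 = Real.exp 2 * Real.exp 2 := by rw [← Real.exp_add]; norm_num
  unfold Ffun
  rw [show (2:ℝ) * 2 = 4 by norm_num, h4]
  nlinarith

lemma Ffun_cont : Continuous Ffun := by unfold Ffun; fun_prop

lemma exists_gamma : ∃ γ : ℝ, 0 < γ ∧ γ < 2 ∧ Ffun γ = 1 := by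
  have h : (1:ℝ) ∈ Set.Ioo (Ffun 0) (Ffun 2) := by
    constructor
    · rw [Ffun_zero]; norm_num
    · exact Ffun_two
  have := intermediate_value_Ioo (by norm_num : (0:ℝ) ≤ 2) (Ffun_cont.continuousOn)
  obtain ⟨γ, hγ, hval⟩ := this h
  exact ⟨γ, hγ.1, hγ.2, hval⟩

lemma lfun_hasDeriv (z : ℂ) :
    HasDerivAt lfun (2 * Complex.exp (2 * z) - (2 + z) * Complex.exp z) z := by
  have he2 : HasDerivAt (fun w : ℂ => Complex.exp (2 * w)) (Complex.exp (2 * z) * 2) z := by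
    have := (Complex.hasDerivAt_exp (2 * z)).comp z ((hasDerivAt_id z).const_mul 2)
    simpa [Function.comp_def] using this
  have hmul : HasDerivAt (fun w : ℂ => (1 + w) * Complex.exp w)
      (1 * Complex.exp z + (1 + z) * Complex.exp z) z :=
    ((hasDerivAt_id z).const_add 1).mul (Complex.hasDerivAt_exp z)
  have h := (he2.sub hmul).sub_const 1
  convert h using 1
  any_goals rfl
  ring

lemma acoef_two : acoef 2 = 1 / 2 := by norm_num [acoef, Nat.factorial]
lemma acoef_three : acoef 3 = 2 / 3 := by norm_num [acoef, Nat.factorial]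

lemma lfun_zero_real {x : ℝ} (hx : lfun (x:ℂ) = 0) : Ffun x = 1 := by
  rw [lfun_real] at hx
  have : Ffun x - 1 = 0 := by exact_mod_cast hx
  linarith

/-- `l` has a unique positive real zero `γ`, this zero is simple
(`l'(γ)` ≠ 0`), and every other complex zero `z` of `l` satisfies `|z| > γ`. -/
theorem stmt16 :
    ∃ γ : ℝ, 0 < γ ∧ lfun γ = 0 ∧
      (∀ γ' : ℝ, 0 < γ' → lfun γ' = 0 → γ' = γ) ∧
      deriv lfun γ ≠ 0 ∧
      ∀ z : ℂ, lfun z = 0 → z ≠ γ → γ < ‖z‖ := by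
  obtain ⟨γ, hγ0, hγ2, hγF⟩ := exists_gamma
  have hγzero : lfun (γ : ℂ) = 0 := by rw [lfun_real, hγF]; norm_num
  have huniq : ∀ γ' : ℝ, 0 < γ' → lfun γ' = 0 → γ' = γ := by
    intro γ' h0 hz
    have hF : Ffun γ' = 1 := lfun_zero_real hz
    rcases lt_trichotomy γ' γ with h | h | h
    · have := Ffun_mono γ' γ h0.le h; rw [hγF, hF] at this; linarith
    · exact h
    · have := Ffun_mono γ γ' hγ0.le h; rw [hγF, hF] at this; linarith
  have hderiv : deriv lfun (γ : ℂ) ≠ 0 := by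
    rw [(lfun_hasDeriv γ).deriv]
    have hcast : (2 : ℂ) * Complex.exp (2 * (γ:ℂ)) - (2 + (γ:ℂ)) * Complex.exp (γ:ℂ)
        = ((2 * Real.exp (2 * γ) - (2 + γ) * Real.exp γ : ℝ) : ℂ) := by
      push_cast [Complex.ofReal_exp]; ring
    rw [hcast]
    rw [Ne, Complex.ofReal_eq_zero]
    have he : Real.exp γ ≥ 1 + γ := by have := Real.add_one_le_exp γ; linarith
    have he2 : Real.exp (2 * γ) = Real.exp γ * Real.exp γ := by
      rw [← Real.exp_add]; ring_nf
    have hp : 0 < Real.exp γ := Real.exp_pos γ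
    nlinarith
  refine ⟨γ, hγ0, hγzero, huniq, hderiv, ?_⟩
  intro z hz hne
  by_contra hle
  push_neg at hle
  have hz0 : z ≠ 0 := by
    intro h
    rw [h] at hz
    simp [lfun] at hz
  set ρ := ‖z‖ with hρdef
  have hρ0 : 0 < ρ := norm_pos_iff.mpr hz0
  set c : ℕ → ℂ := fun n => (acoef n : ℂ) * z ^ n with hc
  have hsum : HasSum c 1 := by have := hasSum_c z; rwa [hz, zero_add] at this
  have hnorm : ∀ n, ‖c n‖ = acoef n * ρ ^ n := by
    intro n
    rw [hc]
    rw [norm_mul, norm_pow, Complex.norm_real, Real.norm_of_nonneg (acoef_nonneg n)]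
  have hsumr := hasSum_r ρ
  have hnormfun : (fun n => ‖c n‖) = fun n => acoef n * ρ ^ n := funext hnorm
  have h1 : (1:ℝ) ≤ Ffun ρ := by
    calc (1:ℝ) = ‖(1:ℂ)‖ := by simp
    _ = ‖∑' n, c n‖ := by rw [hsum.tsum_eq]
    _ ≤ ∑' n, ‖c n‖ := norm_tsum_le_tsum_norm (by rw [hnormfun]; exact hsumr.summable)
    _ = Ffun ρ := by rw [hnormfun, hsumr.tsum_eq]
  have hργ : ρ = γ := by
    rcases lt_or_eq_of_le hle with h | h
    · exfalso
      have := Ffun_mono ρ γ (norm_nonneg z) h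
      rw [hγF] at this; linarith
    · exact h
  -- the remainder series
  set c' : ℕ → ℂ := Function.update (Function.update c 2 0) 3 0 with hc'
  have hupd : HasSum c' (0 - c 3 + (0 - c 2 + 1)) := by
    have h1 := hsum.update 2 0
    have h2' := h1.update 3 0
    have : Function.update c 2 0 3 = c 3 := by
      rw [Function.update_apply]; norm_num
    rwa [this] at h2'
  set r : ℕ → ℝ := fun n => acoef n * γ ^ n with hr
  have hsumγ : HasSum r (Ffun γ) := hasSum_r γ
  set r' : ℕ → ℝ := Function.update (Function.update r 2 0) 3 0 with hr'
  have hupdr : HasSum r' (0 - r 3 + (0 - r 2 + Ffun γ)) := by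
    have h1 := hsumγ.update 2 0
    have h2' := h1.update 3 0
    have : Function.update r 2 0 3 = r 3 := by
      rw [Function.update_apply]; norm_num
    rwa [this] at h2'
  have hnorm' : (fun n => ‖c' n‖) = r' := by
    funext n
    rw [hc', hr']
    rcases eq_or_ne n 3 with h3 | h3
    · subst h3
      rw [Function.update_self, Function.update_self]
      simp
    rcases eq_or_ne n 2 with h2' | h2'
    · subst h2'
      rw [Function.update_of_ne h3, Function.update_of_ne h3,
        Function.update_self, Function.update_self]
      simp
    · rw [Function.update_of_ne h3, Function.update_of_ne h2',
        Function.update_of_ne h3, Function.update_of_ne h2', hnorm n, hργ]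
  have hbound : ‖(1:ℂ) - c 2 - c 3‖ ≤ Ffun γ - r 2 - r 3 := by
    have hle' : ‖∑' n, c' n‖ ≤ ∑' n, ‖c' n‖ :=
      norm_tsum_le_tsum_norm (by rw [hnorm']; exact hupdr.summable)
    rw [hupd.tsum_eq] at hle'
    rw [hnorm', hupdr.tsum_eq] at hle'
    calc ‖(1:ℂ) - c 2 - c 3‖ = ‖0 - c 3 + (0 - c 2 + 1)‖ := by ring_nf
    _ ≤ 0 - r 3 + (0 - r 2 + Ffun γ) := hle'
    _ = Ffun γ - r 2 - r 3 := by ring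
  have hnc2 : ‖c 2‖ = r 2 := by rw [hnorm 2, hργ]
  have hnc3 : ‖c 3‖ = r 3 := by rw [hnorm 3, hργ]
  have hray : SameRay ℝ (c 2) (c 3) := by
    rw [sameRay_iff_norm_add]
    have htri : ‖c 2 + c 3‖ ≤ ‖c 2‖ + ‖c 3‖ := norm_add_le _ _
    have hge : r 2 + r 3 ≤ ‖c 2 + c 3‖ := by
      have : (1:ℝ) ≤ ‖c 2 + c 3‖ + ‖(1:ℂ) - c 2 - c 3‖ := by
        calc (1:ℝ) = ‖c 2 + c 3 + ((1:ℂ) - c 2 - c 3)‖ := by ring_nf; simp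
        _ ≤ ‖c 2 + c 3‖ + ‖(1:ℂ) - c 2 - c 3‖ := norm_add_le _ _
      have hFγ1 : Ffun γ = 1 := hγF
      rw [hFγ1] at hbound
      linarith
    rw [hnc2, hnc3]
    linarith [hge, htri, hnc2, hnc3]
  have hc2ne : c 2 ≠ 0 := by
    rw [hc]
    simp only [acoef_two]
    push_cast
    intro h
    rcases mul_eq_zero.mp h with h' | h'
    · norm_num at h'
    · exact hz0 (pow_eq_zero_iff (by norm_num) |>.mp h')
  have hc3ne : c 3 ≠ 0 := by
    rw [hc]
    simp only [acoef_three]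
    push_cast
    intro h
    rcases mul_eq_zero.mp h with h' | h'
    · norm_num at h'
    · exact hz0 (pow_eq_zero_iff (by norm_num) |>.mp h')
  obtain ⟨t, ht0, hteq⟩ := hray.exists_pos_left hc2ne hc3ne
  -- t • c 2 = c 3, i.e. (t * 1/2) z^2 = (2/3) z^3
  have hz2 : z ^ 2 ≠ 0 := pow_ne_zero 2 hz0
  have hzt : z = ((3 * t / 4 : ℝ) : ℂ) := by
    have h' : (t : ℂ) * ((acoef 2 : ℝ) * z ^ 2) = (acoef 3 : ℝ) * z ^ 3 := by
      have h'' := hteq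
      rw [hc] at h''
      simpa [Complex.real_smul] using h''
    rw [acoef_two, acoef_three] at h'
    push_cast at h'
    have : z ^ 2 * ((3 * t / 4 : ℂ)) = z ^ 2 * z := by ring_nf; ring_nf at h'; linear_combination (3/2 : ℂ) * h'
    have := mul_left_cancel₀ hz2 this
    rw [← this]; push_cast; ring
  have habs : ‖z‖ = 3 * t / 4 := by
    rw [hzt, Complex.norm_real, Real.norm_of_nonneg (by linarith)]
  have : z = (γ : ℂ) := by
    rw [hzt]
    congr 1
    rw [← hργ, hρdef, habs]
  exact hne this
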